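/- Let Q be a finite acyclic quiver and k a field. A finite-dimensional representation N = (N_i, N(α)) of Q is a projective kQ-module if and only if for every vertex i the canonical map ⊕_{α: j→i} N_j → N_i, whose component at an arrow α: j→i is N(α), is injective. -/

import Mathlib

noncomputable section

variable (k : Type) [Field k]

/-- Generators of the path algebra of a quiver: trivial paths and arrows. -/
inductive PGen (V A : Type) : Type
  | vert : V → PGen V A
  | arr : A → PGen V A

noncomputable def pg {V A : Type} (x : PGen V A) : FreeAlgebra k (PGen V A) :=
  FreeAlgebra.ι k x

/-- The defining relations of the path algebra of the quiver with vertex set `V`, arrow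
set `A`, source `s` and target `t`: the trivial paths `e_i` are orthogonal idempotents
summing to `1`, and `e_{t a} · a = a = a · e_{s a}`. -/
inductive PathRel (V A : Type) [Fintype V] (s t : A → V) :
    FreeAlgebra k (PGen V A) → FreeAlgebra k (PGen V A) → Prop
  | idem (i : V) : PathRel V A s t (pg k (PGen.vert i) * pg k (PGen.vert i)) (pg k (PGen.vert i))
  | orth (i j : V) (hij : i ≠ j) : PathRel V A s t (pg k (PGen.vert i) * pg k (PGen.vert j)) 0
  | unit : PathRel V A s t (∑ i : V, pg k (PGen.vert i)) 1
  | src (a : A) : PathRel V A s t (pg k (PGen.arr a) * pg k (PGen.vert (s a))) (pg k (PGen.arr a))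
  | tgt (a : A) : PathRel V A s t (pg k (PGen.vert (t a)) * pg k (PGen.arr a)) (pg k (PGen.arr a))
  | src0 (a : A) (i : V) (hi : i ≠ s a) : PathRel V A s t (pg k (PGen.arr a) * pg k (PGen.vert i)) 0
  | tgt0 (a : A) (i : V) (hi : i ≠ t a) : PathRel V A s t (pg k (PGen.vert i) * pg k (PGen.arr a)) 0

/-- The path algebra `kQ` of a quiver, given by its standard presentation. -/
abbrev PathAlg (V A : Type) [Fintype V] (s t : A → V) : Type :=
  RingQuot (PathRel k V A s t)

/-- The trivial path `e_i` in the path algebra. -/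
noncomputable def pv (V A : Type) [Fintype V] (s t : A → V) (i : V) : PathAlg k V A s t :=
  RingQuot.mkAlgHom k (PathRel k V A s t) (pg k (PGen.vert i))

/-- The class of an arrow in the path algebra. -/
noncomputable def pa (V A : Type) [Fintype V] (s t : A → V) (a : A) : PathAlg k V A s t :=
  RingQuot.mkAlgHom k (PathRel k V A s t) (pg k (PGen.arr a))


namespace QPAux

open Submodule

variable {V A : Type} (s t : A → V)

/-- Paths in the quiver: `Pth s t j i` is paths from `j` to `i`. -/
inductive Pth : V → V → Type
  | nil (i : V) : Pth i i
  | cons (a : A) {j : V} (p : Pth j (s a)) : Pth j (t a)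

namespace Pth

variable {s t}

def len : ∀ {j i : V}, Pth s t j i → ℕ
  | _, _, .nil _ => 0
  | _, _, .cons _ p => len p + 1

def app : ∀ {j i l : V}, Pth s t j i → Pth s t l j → Pth s t l i
  | _, _, _, .nil _, q => q
  | _, _, _, .cons a p, q => .cons a (p.app q)

lemma len_app : ∀ {j i l : V} (p : Pth s t j i) (q : Pth s t l j),
    (p.app q).len = p.len + q.len
  | _, _, _, .nil _, q => by simp [app, len]
  | _, _, _, .cons a p, q => by simp [app, len, len_app p q]; omega

lemma eq_of_len_zero : ∀ {j i : V} (p : Pth s t j i), p.len = 0 → j = i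
  | _, _, .nil _, _ => rfl
  | _, _, .cons a p, h => by simp [len] at h

/-- The arrows of a path, as a function on `Fin (len p)`, in traversal order. -/
def arrFun : ∀ {j i : V} (p : Pth s t j i), Fin p.len → A
  | _, _, .cons a p => fun m =>
      if h : (m : ℕ) < p.len then p.arrFun ⟨m, h⟩ else a
  | _, _, .nil _ => Fin.elim0

lemma arrFun_src : ∀ {j i : V} (p : Pth s t j i) (h : 0 < p.len),
    s (p.arrFun ⟨0, h⟩) = j
  | _, _, .cons a p, h => by
      by_cases h0 : 0 < p.len
      · simp only [arrFun, dif_pos h0]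
        exact arrFun_src p h0
      · simp only [arrFun, dif_neg h0]
        exact (eq_of_len_zero p (by omega)).symm

lemma arrFun_tgt : ∀ {j i : V} (p : Pth s t j i) (h : 0 < p.len),
    t (p.arrFun ⟨p.len - 1, by omega⟩) = i
  | _, _, .cons a p, h => by
      simp only [arrFun, len]
      exact congrArg t (dif_neg (show ¬(p.len + 1 - 1 < p.len) by omega))

lemma arrFun_chain : ∀ {j i : V} (p : Pth s t j i) (m : ℕ) (h : m + 1 < p.len),
    t (p.arrFun ⟨m, by omega⟩) = s (p.arrFun ⟨m + 1, h⟩)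
  | _, _, .cons a p, m, h => by
      simp only [arrFun, len] at h ⊢
      by_cases h1 : m + 1 < p.len
      · rw [dif_pos h1, dif_pos (show m < p.len by omega)]
        exact arrFun_chain p m h1
      · have hm : m + 1 = p.len := by omega
        rw [dif_neg (show ¬(m + 1 < p.len) by omega), dif_pos (show m < p.len by omega)]
        have ht := arrFun_tgt p (by omega)
        have hidx : (⟨m, show m < p.len by omega⟩ : Fin p.len) = ⟨p.len - 1, by omega⟩ :=
          Fin.ext (by simp; omega)
        rw [hidx]
        exact ht

end Pth

section Acyclic

variable {s t}
variable (hacyc : ∀ (n : ℕ) (p : Fin (n + 1) → A),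
      (∀ m : Fin n, t (p m.castSucc) = s (p m.succ)) → s (p 0) ≠ t (p (Fin.last n)))

include hacyc

lemma ne_of_len_pos {j i : V} (p : Pth s t j i) (h : 0 < p.len) : j ≠ i := by
  obtain ⟨n, hn⟩ : ∃ n, p.len = n + 1 := ⟨p.len - 1, by omega⟩
  intro hji
  refine hacyc n (fun m => p.arrFun (Fin.cast hn.symm m)) (fun m => ?_) ?_
  · have hm := m.isLt
    have key := Pth.arrFun_chain p (m : ℕ) (by omega)
    have e1 : (Fin.cast hn.symm m.castSucc) = (⟨(m : ℕ), by omega⟩ : Fin p.len) :=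
      Fin.ext rfl
    have e2 : (Fin.cast hn.symm m.succ) = (⟨(m : ℕ) + 1, by omega⟩ : Fin p.len) :=
      Fin.ext rfl
    beta_reduce
    rw [e1, e2]
    exact key
  · have e1 : (Fin.cast hn.symm 0) = (⟨0, by omega⟩ : Fin p.len) := Fin.ext rfl
    have e2 : (Fin.cast hn.symm (Fin.last n)) = (⟨p.len - 1, by omega⟩ : Fin p.len) :=
      Fin.ext (by simp [Fin.last]; omega)
    beta_reduce
    rw [e1, e2, Pth.arrFun_src p (by omega), Pth.arrFun_tgt p (by omega)]
    exact hji

lemma eq_nil_self {i : V} (p : Pth s t i i) : p = Pth.nil i := by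
  by_cases h : 0 < p.len
  · exact absurd rfl (ne_of_len_pos hacyc p h)
  · cases p with
    | nil => rfl
    | cons a q => simp [Pth.len] at h

def verts : ∀ {j i : V}, Pth s t j i → List V
  | _, i, .nil _ => [i]
  | _, _, .cons a p => t a :: verts p

omit hacyc in
lemma length_verts {j i : V} (p : Pth s t j i) : (verts p).length = p.len + 1 := by
  induction p with
  | nil => simp [verts, Pth.len]
  | cons a p ih => simp [verts, Pth.len, ih]

omit hacyc in
lemma exists_path_of_mem_verts {j i : V} (p : Pth s t j i) :
    ∀ v ∈ verts p, Nonempty (Pth s t v i) := by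
  induction p with
  | nil => intro v hv; simp [verts] at hv; exact ⟨hv ▸ Pth.nil v⟩
  | cons a p ih =>
      intro v hv
      simp only [verts, List.mem_cons] at hv
      rcases hv with rfl | hv
      · exact ⟨Pth.nil _⟩
      · obtain ⟨q⟩ := ih v hv
        exact ⟨Pth.cons a q⟩

lemma verts_nodup {j i : V} (p : Pth s t j i) : (verts p).Nodup := by
  induction p with
  | nil => simp [verts]
  | cons a p ih =>
      simp only [verts, List.nodup_cons]
      refine ⟨fun hmem => ?_, ih⟩
      obtain ⟨q⟩ := exists_path_of_mem_verts p _ hmem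
      have := ne_of_len_pos hacyc (Pth.cons a q) (by simp [Pth.len])
      exact this rfl

lemma len_lt_card [Fintype V] {j i : V} (p : Pth s t j i) : p.len < Fintype.card V := by
  have := List.Nodup.length_le_card (verts_nodup hacyc p)
  rw [length_verts] at this
  omega

end Acyclic


section Alg

variable (k : Type) [Field k] [Fintype V] [DecidableEq V]

local notation "R" => PathAlg k V A s t
local notation "mk" => RingQuot.mkAlgHom k (PathRel k V A s t)

lemma pv_mul_pv (i j : V) :
    pv k V A s t i * pv k V A s t j = if i = j then pv k V A s t i else 0 := by
  split_ifs with h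
  · subst h
    simp only [pv, ← map_mul]
    exact RingQuot.mkAlgHom_rel k (PathRel.idem i)
  · simp only [pv, ← map_mul]
    have := RingQuot.mkAlgHom_rel k (PathRel.orth (k := k) (s := s) (t := t) i j h)
    rw [this, map_zero]

lemma pa_mul_pv (a : A) (i : V) :
    pa k V A s t a * pv k V A s t i = if i = s a then pa k V A s t a else 0 := by
  split_ifs with h
  · subst h
    simp only [pa, pv, ← map_mul]
    exact RingQuot.mkAlgHom_rel k (PathRel.src a)
  · simp only [pa, pv, ← map_mul]
    have := RingQuot.mkAlgHom_rel k (PathRel.src0 (k := k) (s := s) (t := t) a i h)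
    rw [this, map_zero]

lemma pv_mul_pa (i : V) (a : A) :
    pv k V A s t i * pa k V A s t a = if i = t a then pa k V A s t a else 0 := by
  split_ifs with h
  · subst h
    simp only [pa, pv, ← map_mul]
    exact RingQuot.mkAlgHom_rel k (PathRel.tgt a)
  · simp only [pa, pv, ← map_mul]
    have := RingQuot.mkAlgHom_rel k (PathRel.tgt0 (k := k) (s := s) (t := t) a i h)
    rw [this, map_zero]

lemma sum_pv : ∑ i : V, pv k V A s t i = 1 := by
  have := RingQuot.mkAlgHom_rel k (PathRel.unit (k := k) (V := V) (A := A) (s := s) (t := t))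
  rw [map_sum, map_one] at this
  exact this

variable {s t}

/-- The element of the path algebra attached to a path. -/
def pe : ∀ {j i : V}, Pth s t j i → R
  | _, _, .nil i => pv k V A s t i
  | _, _, .cons a p => pa k V A s t a * pe p

@[simp] lemma pe_nil (i : V) : pe k (Pth.nil i : Pth s t i i) = pv k V A s t i := rfl

@[simp] lemma pe_cons (a : A) {j : V} (p : Pth s t j (s a)) :
    pe k (Pth.cons a p) = pa k V A s t a * pe k p := rfl

lemma pv_mul_pe {j i : V} (l : V) (p : Pth s t j i) :
    pv k V A s t l * pe k p = if l = i then pe k p else 0 := by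
  induction p with
  | nil m =>
      rw [pe_nil, pv_mul_pv]
      split_ifs with h
      · rw [h]
      · rfl
  | cons a p ih =>
      rw [pe_cons, ← mul_assoc, pv_mul_pa]
      split_ifs with h
      · rfl
      · rw [zero_mul]

lemma pe_mul_pv {j i : V} (p : Pth s t j i) (l : V) :
    pe k p * pv k V A s t l = if l = j then pe k p else 0 := by
  induction p with
  | nil m =>
      rw [pe_nil, pv_mul_pv]
      split_ifs with h1 h2 h2 <;> first | rfl | (exact absurd h1.symm h2) | (exact absurd h2.symm h1)
  | cons a p ih =>
      rw [pe_cons, mul_assoc, ih]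
      split_ifs with h
      · rfl
      · rw [mul_zero]

lemma pe_mul_pe {j i l : V} (p : Pth s t j i) (q : Pth s t l j) :
    pe k p * pe k q = pe k (p.app q) := by
  induction p with
  | nil m => rw [pe_nil, pv_mul_pe, if_pos rfl]; rfl
  | cons a p ih => rw [pe_cons, Pth.app, pe_cons, mul_assoc, ih]

lemma pe_mul_pe_ne {j i l j' : V} (p : Pth s t j i) (q : Pth s t l j') (hne : j' ≠ j) :
    pe k p * pe k q = 0 := by
  induction p with
  | nil m => rw [pe_nil, pv_mul_pe, if_neg (fun h => hne h.symm)]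
  | cons a p ih => rw [pe_cons, mul_assoc, ih hne, mul_zero]

lemma pa_eq_pe (a : A) : pa k V A s t a = pe k (Pth.cons a (Pth.nil (s a))) := by
  rw [pe_cons, pe_nil, pa_mul_pv, if_pos rfl]

/-- The span of all path elements is everything. -/
lemma span_pe_top :
    Submodule.span k {x : R | ∃ (j i : V) (p : Pth s t j i), x = pe k p} = ⊤ := by
  set S := Submodule.span k {x : R | ∃ (j i : V) (p : Pth s t j i), x = pe k p} with hS
  have hpe : ∀ {j i : V} (p : Pth s t j i), pe k p ∈ S :=
    fun p => Submodule.subset_span ⟨_, _, p, rfl⟩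
  have hone : (1 : R) ∈ S := by
    rw [← sum_pv s t k]
    exact Submodule.sum_mem _ (fun i _ => hpe (Pth.nil i))
  have hmulpe : ∀ {j i : V} (p : Pth s t j i) (y : R), y ∈ S → pe k p * y ∈ S := by
    intro j i p y hy
    refine Submodule.span_induction ?_ ?_ ?_ ?_ hy
    · rintro x ⟨j', i', q, rfl⟩
      by_cases h : i' = j
      · subst h; rw [pe_mul_pe]; exact hpe _
      · rw [pe_mul_pe_ne k p q h]; exact zero_mem _
    · rw [mul_zero]; exact zero_mem _
    · intro x y _ _ hx hy; rw [mul_add]; exact add_mem hx hy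
    · intro c x _ hx; rw [mul_smul_comm]; exact Submodule.smul_mem _ _ hx
  have hmul : ∀ x y : R, x ∈ S → y ∈ S → x * y ∈ S := by
    intro x y hx hy
    refine Submodule.span_induction ?_ ?_ ?_ ?_ hx
    · rintro x ⟨j', i', q, rfl⟩; exact hmulpe q y hy
    · rw [zero_mul]; exact zero_mem _
    · intro u w _ _ hu hw; rw [add_mul]; exact add_mem hu hw
    · intro c u _ hu; rw [smul_mul_assoc]; exact Submodule.smul_mem _ _ hu
  rw [eq_top_iff]
  intro x _
  obtain ⟨y, rfl⟩ := RingQuot.mkAlgHom_surjective k (PathRel k V A s t) x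
  induction y using FreeAlgebra.induction with
  | grade0 r =>
      rw [AlgHom.commutes, Algebra.algebraMap_eq_smul_one]
      exact Submodule.smul_mem _ _ hone
  | grade1 g =>
      cases g with
      | vert i => exact hpe (Pth.nil i)
      | arr a =>
          show pa k V A s t a ∈ S
          rw [pa_eq_pe k a]
          exact hpe _
  | mul a b ha hb => rw [map_mul]; exact hmul _ _ (ha trivial) (hb trivial)
  | add a b ha hb => rw [map_add]; exact add_mem (ha trivial) (hb trivial)

end Alg


/-- Index type for paths. -/
abbrev PIdx (s t : A → V) : Type := Σ j : V, Σ i : V, Pth s t j i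

section Spans

variable (k : Type) [Field k] [Fintype V] [DecidableEq V]
variable {s t}

local notation "R" => PathAlg k V A s t

/-- Span of path elements from `j` to `l`. -/
def spJL (j l : V) : Submodule k R := Submodule.span k {x | ∃ p : Pth s t j l, x = pe k p}

/-- Span of path elements from `j` to `l` of length at most `n`. -/
def spJLn (j l : V) (n : ℕ) : Submodule k R :=
  Submodule.span k {x | ∃ p : Pth s t j l, p.len ≤ n ∧ x = pe k p}

/-- Span of path elements with target `l`. -/
def spTgt (l : V) : Submodule k R := Submodule.span k {x | ∃ (j : V) (p : Pth s t j l), x = pe k p}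

lemma sandwich_mem_spJL (j l : V) (x : R) : pv k V A s t l * x * pv k V A s t j ∈ spJL k j l := by
  have hx : x ∈ Submodule.span k {x : R | ∃ (j i : V) (p : Pth s t j i), x = pe k p} := by
    rw [span_pe_top]; trivial
  refine Submodule.span_induction ?_ ?_ ?_ ?_ hx
  · rintro y ⟨j', i', q, rfl⟩
    rw [pv_mul_pe]
    by_cases h : l = i'
    · rw [if_pos h, pe_mul_pv]
      by_cases h2 : j = j'
      · rw [if_pos h2]
        subst h; subst h2
        exact Submodule.subset_span ⟨q, rfl⟩
      · rw [if_neg h2]; exact zero_mem _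
    · rw [if_neg h, zero_mul]; exact zero_mem _
  · rw [mul_zero, zero_mul]; exact zero_mem _
  · intro u w _ _ hu hw
    rw [mul_add, add_mul]; exact add_mem hu hw
  · intro c u _ hu
    rw [mul_smul_comm, smul_mul_assoc]; exact Submodule.smul_mem _ _ hu

lemma mem_spJL_of_mul (j l : V) (x : R) (h1 : pv k V A s t l * x = x)
    (h2 : x * pv k V A s t j = x) : x ∈ spJL k j l := by
  have := sandwich_mem_spJL k j l x
  rwa [h1, h2] at this

lemma pv_mul_of_mem_spJL {j l : V} {x : R} (hx : x ∈ spJL k j l) :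
    pv k V A s t l * x = x := by
  refine Submodule.span_induction ?_ ?_ ?_ ?_ hx
  · rintro y ⟨p, rfl⟩; rw [pv_mul_pe, if_pos rfl]
  · rw [mul_zero]
  · intro u w _ _ hu hw; rw [mul_add, hu, hw]
  · intro c u _ hu; rw [mul_smul_comm, hu]

lemma mul_pv_of_mem_spJL {j l : V} {x : R} (hx : x ∈ spJL k j l) :
    x * pv k V A s t j = x := by
  refine Submodule.span_induction ?_ ?_ ?_ ?_ hx
  · rintro y ⟨p, rfl⟩; rw [pe_mul_pv, if_pos rfl]
  · rw [zero_mul]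
  · intro u w _ _ hu hw; rw [add_mul, hu, hw]
  · intro c u _ hu; rw [smul_mul_assoc, hu]

lemma spJLn_le_spJL {j l : V} {n : ℕ} {x : R} (hx : x ∈ spJLn k j l n) : x ∈ spJL k j l := by
  refine Submodule.span_le.2 ?_ hx
  rintro x ⟨p, _, rfl⟩
  exact Submodule.subset_span ⟨p, rfl⟩

lemma pv_mul_mem_spTgt (l : V) (x : R) : pv k V A s t l * x ∈ spTgt k l := by
  have hx : x ∈ Submodule.span k {x : R | ∃ (j i : V) (p : Pth s t j i), x = pe k p} := by
    rw [span_pe_top]; trivial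
  refine Submodule.span_induction ?_ ?_ ?_ ?_ hx
  · rintro y ⟨j', i', q, rfl⟩
    rw [pv_mul_pe]
    by_cases h : l = i'
    · rw [if_pos h]; subst h; exact Submodule.subset_span ⟨j', q, rfl⟩
    · rw [if_neg h]; exact zero_mem _
  · rw [mul_zero]; exact zero_mem _
  · intro u w _ _ hu hw; rw [mul_add]; exact add_mem hu hw
  · intro c u _ hu; rw [mul_smul_comm]; exact Submodule.smul_mem _ _ hu

section WithAcyc

variable (hacyc : ∀ (n : ℕ) (p : Fin (n + 1) → A),
      (∀ m : Fin n, t (p m.castSucc) = s (p m.succ)) → s (p 0) ≠ t (p (Fin.last n)))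
include hacyc

lemma spJL_le_spJLn [Fintype V] (j l : V) :
    spJL (s := s) (t := t) k j l ≤ spJLn k j l (Fintype.card V) := by
  refine Submodule.span_le.2 ?_
  rintro x ⟨p, rfl⟩
  exact Submodule.subset_span ⟨p, le_of_lt (len_lt_card hacyc p), rfl⟩

lemma spJL_self_le (i : V) : spJL (s := s) (t := t) k i i ≤ Submodule.span k {pv k V A s t i} := by
  refine Submodule.span_le.2 ?_
  rintro x ⟨p, rfl⟩
  rw [eq_nil_self hacyc p, pe_nil]
  exact Submodule.subset_span rfl

end WithAcyc

lemma spJLn_ne_zero {j l : V} (hne : j ≠ l) {x : R} (hx : x ∈ spJLn k j l 0) : x = 0 := by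
  have : spJLn (s := s) (t := t) k j l 0 ≤ (⊥ : Submodule k (PathAlg k V A s t)) := by
    refine Submodule.span_le.2 ?_
    rintro x ⟨p, hlen, rfl⟩
    exact absurd (Pth.eq_of_len_zero p (by omega)) hne
  simpa using this hx

end Spans

section PathModule

open Finsupp

variable (k : Type) [Field k] [Fintype V] [DecidableEq V]
variable {s t}

local notation "R" => PathAlg k V A s t
local notation "N" => (PIdx s t →₀ k)

open scoped Classical

/-- Action of a trivial path on the path module. -/
def vertOp (i : V) : N →ₗ[k] N :=
  Finsupp.linearCombination k (fun q : PIdx s t => if q.2.1 = i then Finsupp.single q (1:k) else 0)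

/-- Action of an arrow on the path module. -/
def arrOp (a : A) : N →ₗ[k] N :=
  Finsupp.linearCombination k (fun q : PIdx s t =>
    if h : q.2.1 = s a then Finsupp.single ⟨q.1, t a, Pth.cons a (h ▸ q.2.2)⟩ (1:k) else 0)

/-- Deconcatenation data. -/
def dArr (a : A) : PIdx s t → N
  | ⟨_, _, Pth.nil _⟩ => 0
  | ⟨j, _, Pth.cons b p⟩ => if b = a then Finsupp.single ⟨j, _, p⟩ (1:k) else 0

/-- Deconcatenation by an arrow. -/
def dOp (a : A) : N →ₗ[k] N := Finsupp.linearCombination k (dArr k a)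

lemma vertOp_apply_single (i : V) (q : PIdx s t) (b : k) :
    vertOp k i (Finsupp.single q b) = if q.2.1 = i then Finsupp.single q b else 0 := by
  rw [vertOp, Finsupp.linearCombination_single]
  split_ifs with h
  · rw [Finsupp.smul_single, smul_eq_mul, mul_one]
  · rw [smul_zero]

lemma arrOp_apply_single (a : A) (q : PIdx s t) (b : k) :
    arrOp k a (Finsupp.single q b) =
      if h : q.2.1 = s a then Finsupp.single ⟨q.1, t a, Pth.cons a (h ▸ q.2.2)⟩ b else 0 := by
  rw [arrOp, Finsupp.linearCombination_single]
  split_ifs with h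
  · rw [Finsupp.smul_single, smul_eq_mul, mul_one]
  · rw [smul_zero]

lemma dOp_apply_single_nil (a : A) (i : V) (b : k) :
    dOp k a (Finsupp.single (⟨i, i, Pth.nil i⟩ : PIdx s t) b) = 0 := by
  rw [dOp, Finsupp.linearCombination_single]
  show b • dArr k a ⟨i, i, Pth.nil i⟩ = 0
  rw [dArr, smul_zero]

lemma dOp_apply_single_cons (a b' : A) {j : V} (p : Pth s t j (s b')) (b : k) :
    dOp k a (Finsupp.single (⟨j, t b', Pth.cons b' p⟩ : PIdx s t) b) =
      if b' = a then Finsupp.single (⟨j, s b', p⟩ : PIdx s t) b else 0 := by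
  rw [dOp, Finsupp.linearCombination_single]
  show b • dArr k a ⟨j, t b', Pth.cons b' p⟩ = _
  rw [dArr]
  split_ifs with h
  · rw [Finsupp.smul_single, smul_eq_mul, mul_one]
  · rw [smul_zero]

/-- Generator assignments. -/
def genOp : PGen V A → Module.End k N
  | .vert i => vertOp k i
  | .arr a => arrOp k a

lemma genOp_rel : ∀ ⦃x y : FreeAlgebra k (PGen V A)⦄, PathRel k V A s t x y →
    (FreeAlgebra.lift k (genOp (s := s) (t := t) k)) x
      = (FreeAlgebra.lift k (genOp (s := s) (t := t) k)) y := by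
  intro x y h
  cases h with
  | idem i =>
      simp only [map_mul, pg, FreeAlgebra.lift_ι_apply, genOp]
      refine Finsupp.lhom_ext fun q b => ?_
      rw [Module.End.mul_apply, vertOp_apply_single]
      split_ifs with h
      · rw [vertOp_apply_single, if_pos h]
      · rw [map_zero]
  | orth i j hij =>
      simp only [map_mul, map_zero, pg, FreeAlgebra.lift_ι_apply, genOp]
      refine Finsupp.lhom_ext fun q b => ?_
      rw [Module.End.mul_apply, vertOp_apply_single, LinearMap.zero_apply]
      split_ifs with h
      · rw [vertOp_apply_single, if_neg (by rw [h]; exact fun hh => hij hh.symm)]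
      · rw [map_zero]
  | unit =>
      simp only [map_sum, map_one, pg, FreeAlgebra.lift_ι_apply, genOp]
      refine Finsupp.lhom_ext fun q b => ?_
      rw [LinearMap.sum_apply, Module.End.one_apply]
      have : ∀ i : V, vertOp k i (Finsupp.single q b)
          = if q.2.1 = i then Finsupp.single q b else 0 := fun i => vertOp_apply_single k i q b
      simp only [this]
      rw [Finset.sum_ite_eq (Finset.univ) q.2.1 (fun _ => Finsupp.single q b)]
      rw [if_pos (Finset.mem_univ _)]
  | src a =>
      simp only [map_mul, pg, FreeAlgebra.lift_ι_apply, genOp]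
      refine Finsupp.lhom_ext fun q b => ?_
      rw [Module.End.mul_apply, vertOp_apply_single, arrOp_apply_single]
      split_ifs with h
      · rw [arrOp_apply_single, dif_pos h]
      · rw [map_zero]
  | tgt a =>
      simp only [map_mul, pg, FreeAlgebra.lift_ι_apply, genOp]
      refine Finsupp.lhom_ext fun q b => ?_
      rw [Module.End.mul_apply, arrOp_apply_single]
      split_ifs with h
      · rw [vertOp_apply_single, if_pos rfl]
      · rw [map_zero]
  | src0 a i hi =>
      simp only [map_mul, map_zero, pg, FreeAlgebra.lift_ι_apply, genOp]
      refine Finsupp.lhom_ext fun q b => ?_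
      rw [Module.End.mul_apply, vertOp_apply_single, LinearMap.zero_apply]
      split_ifs with h
      · rw [arrOp_apply_single, dif_neg (by rw [h]; exact fun hh => hi hh)]
      · rw [map_zero]
  | tgt0 a i hi =>
      simp only [map_mul, map_zero, pg, FreeAlgebra.lift_ι_apply, genOp]
      refine Finsupp.lhom_ext fun q b => ?_
      rw [Module.End.mul_apply, arrOp_apply_single, LinearMap.zero_apply]
      split_ifs with h
      · rw [vertOp_apply_single, if_neg (by intro hh; exact hi (by rw [← hh]))]
      · rw [map_zero]

/-- The representation of the path algebra on the path module. -/
def FH : PathAlg k V A s t →ₐ[k] Module.End k N :=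
  RingQuot.liftAlgHom k ⟨FreeAlgebra.lift k (genOp k), genOp_rel k⟩

lemma FH_pv (i : V) : FH k (pv k V A s t i) = vertOp k i := by
  rw [pv, FH, RingQuot.liftAlgHom_mkAlgHom_apply, pg, FreeAlgebra.lift_ι_apply]
  rfl

lemma FH_pa (a : A) : FH k (pa k V A s t a) = arrOp k a := by
  rw [pa, FH, RingQuot.liftAlgHom_mkAlgHom_apply, pg, FreeAlgebra.lift_ι_apply]
  rfl

/-- The image of `1`. -/
def uElt : N := ∑ i : V, Finsupp.single (⟨i, i, Pth.nil i⟩ : PIdx s t) (1:k)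

/-- The linear map realizing the regular representation on paths. -/
def rho : PathAlg k V A s t →ₗ[k] N where
  toFun r := FH k r (uElt k)
  map_add' x y := by simp only [map_add, LinearMap.add_apply]
  map_smul' c x := by simp only [map_smul, LinearMap.smul_apply, RingHom.id_apply]

lemma rho_pe {j i : V} (p : Pth s t j i) :
    rho k (pe k p) = Finsupp.single (⟨j, i, p⟩ : PIdx s t) (1:k) := by
  induction p with
  | nil i =>
      show FH k (pv k V A s t i) (uElt k) = _
      rw [FH_pv, uElt, map_sum]
      have : ∀ l : V, vertOp k i (Finsupp.single (⟨l, l, Pth.nil l⟩ : PIdx s t) (1:k))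
          = if l = i then Finsupp.single (⟨l, l, Pth.nil l⟩ : PIdx s t) (1:k) else 0 :=
        fun l => vertOp_apply_single k i _ 1
      simp only [this]
      rw [Finset.sum_ite_eq' (Finset.univ) i
        (fun l => Finsupp.single (⟨l, l, Pth.nil l⟩ : PIdx s t) (1:k)), if_pos (Finset.mem_univ _)]
  | cons a p ih =>
      show FH k (pa k V A s t a * pe k p) (uElt k) = _
      rw [map_mul, Module.End.mul_apply]
      have : FH k (pe k p) (uElt k) = Finsupp.single _ 1 := ih
      rw [this, FH_pa, arrOp_apply_single, dif_pos rfl]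

/-- Reading a path combination back into the algebra. -/
def sig : N →ₗ[k] PathAlg k V A s t := Finsupp.linearCombination k (fun q : PIdx s t => pe k q.2.2)

/-- Left deconcatenation operator on the path algebra. -/
def Lop (a : A) : PathAlg k V A s t →ₗ[k] PathAlg k V A s t :=
  (sig k) ∘ₗ (dOp k a) ∘ₗ (rho k)

lemma Lop_pe_cons (a b : A) {j : V} (p : Pth s t j (s b)) :
    Lop k a (pe k (Pth.cons b p)) = if b = a then pe k p else 0 := by
  rw [Lop, LinearMap.comp_apply, LinearMap.comp_apply, rho_pe, dOp_apply_single_cons]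
  split_ifs with h
  · rw [sig, Finsupp.linearCombination_single, one_smul]
  · rw [map_zero]

lemma Lop_pe_nil (a : A) (i : V) : Lop k a (pe k (Pth.nil i : Pth s t i i)) = 0 := by
  rw [Lop, LinearMap.comp_apply, LinearMap.comp_apply, rho_pe, dOp_apply_single_nil, map_zero]

lemma Lop_pa_mul (a b : A) {z : R} (hz : z ∈ spTgt k (s b)) :
    Lop k a (pa k V A s t b * z) = if b = a then z else 0 := by
  refine Submodule.span_induction ?_ ?_ ?_ ?_ hz
  · rintro y ⟨j, p, rfl⟩
    rw [← pe_cons, Lop_pe_cons]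
  · rw [mul_zero, map_zero]; split_ifs <;> rfl
  · intro u w _ _ hu hw
    rw [mul_add, map_add, hu, hw]
    split_ifs <;> simp
  · intro c u _ hu
    rw [mul_smul_comm, map_smul, hu]
    split_ifs <;> simp

lemma Lop_mem_spJL (a : A) {j l : V} {x : R} (hx : x ∈ spJL k j l) :
    Lop k a x ∈ spJL k j (s a) := by
  refine Submodule.span_induction ?_ ?_ ?_ ?_ hx
  · rintro y ⟨p, rfl⟩
    cases p with
    | nil => rw [Lop_pe_nil]; exact zero_mem _
    | cons b p' =>
        rw [Lop_pe_cons]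
        split_ifs with h
        · subst h; exact Submodule.subset_span ⟨p', rfl⟩
        · exact zero_mem _
  · rw [map_zero]; exact zero_mem _
  · intro u w _ _ hu hw; rw [map_add]; exact add_mem hu hw
  · intro c u _ hu; rw [map_smul]; exact Submodule.smul_mem _ _ hu

lemma Lop_mem_spJLn (a : A) {j l : V} {n : ℕ} {x : R} (hx : x ∈ spJLn k j l (n+1)) :
    Lop k a x ∈ spJLn k j (s a) n := by
  refine Submodule.span_induction ?_ ?_ ?_ ?_ hx
  · rintro y ⟨p, hlen, rfl⟩
    cases p with
    | nil => rw [Lop_pe_nil]; exact zero_mem _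
    | cons b p' =>
        rw [Lop_pe_cons]
        split_ifs with h
        · subst h
          refine Submodule.subset_span ⟨p', ?_, rfl⟩
          simp only [Pth.len] at hlen
          omega
        · exact zero_mem _
  · rw [map_zero]; exact zero_mem _
  · intro u w _ _ hu hw; rw [map_add]; exact add_mem hu hw
  · intro c u _ hu; rw [map_smul]; exact Submodule.smul_mem _ _ hu

lemma key_identity [Fintype A] {j l : V} (hne : j ≠ l) {x : R} (hx : x ∈ spJL k j l) :
    x = ∑ a : {a : A // t a = l}, pa k V A s t a.1 * Lop k a.1 x := by
  refine Submodule.span_induction ?_ ?_ ?_ ?_ hx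
  · rintro y ⟨p, rfl⟩
    cases p with
    | nil => exact absurd rfl hne
    | cons b p' =>
        rw [Finset.sum_congr rfl (fun a _ => by rw [Lop_pe_cons])]
        rw [Fintype.sum_eq_single (⟨b, rfl⟩ : {a : A // t a = t b})]
        · rw [if_pos rfl, pe_cons]
        · intro a ha
          rw [if_neg (fun h => ha (Subtype.ext h.symm)), mul_zero]
  · simp
  · intro u w _ _ hu hw
    conv_lhs => rw [hu, hw]
    rw [← Finset.sum_add_distrib]
    exact Finset.sum_congr rfl (fun a _ => by rw [map_add, mul_add])
  · intro c u _ hu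
    conv_lhs => rw [hu]
    rw [Finset.smul_sum]
    exact Finset.sum_congr rfl (fun a _ => by rw [map_smul, mul_smul_comm])

end PathModule


section CondSec

variable (k : Type) [Field k] [Fintype V] [Fintype A] [DecidableEq V]

/-- The injectivity condition on arrow maps. -/
def Cond (M : Type) [AddCommGroup M] [Module (PathAlg k V A s t) M] : Prop :=
  ∀ i : V, ∀ x y : {a : A // t a = i} → M,
    (∀ a : {a : A // t a = i}, (pv k V A s t (s a.1)) • x a = x a) →
    (∀ a : {a : A // t a = i}, (pv k V A s t (s a.1)) • y a = y a) →
    (∑ a : {a : A // t a = i}, (pa k V A s t a.1) • x a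
      = ∑ a : {a : A // t a = i}, (pa k V A s t a.1) • y a) →
    x = y

variable {s t}

lemma cond_of_inj {M M' : Type} [AddCommGroup M] [Module (PathAlg k V A s t) M]
    [AddCommGroup M'] [Module (PathAlg k V A s t) M'] (f : M →ₗ[PathAlg k V A s t] M')
    (hf : Function.Injective f) (h : Cond s t k M') : Cond s t k M := by
  intro i x y hx hy hs
  have key := h i (fun a => f (x a)) (fun a => f (y a)) ?_ ?_ ?_
  · funext a
    exact hf (congrFun key a)
  · intro a; rw [← map_smul, hx a]
  · intro a; rw [← map_smul, hy a]
  · simp only [← map_smul, ← map_sum, hs]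

lemma cond_R : Cond s t k (PathAlg k V A s t) := by
  classical
  intro i x y hx hy hs
  have key : ∀ a : {a : A // t a = i}, x a = y a := by
    intro a
    have hxa : ∀ b : {a : A // t a = i}, x b ∈ spTgt k (s b.1) := by
      intro b
      have := hx b
      rw [smul_eq_mul] at this
      rw [← this]
      exact pv_mul_mem_spTgt k _ _
    have hya : ∀ b : {a : A // t a = i}, y b ∈ spTgt k (s b.1) := by
      intro b
      have := hy b
      rw [smul_eq_mul] at this
      rw [← this]
      exact pv_mul_mem_spTgt k _ _
    have happ := congrArg (Lop k a.1) hs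
    rw [map_sum, map_sum] at happ
    have hterm : ∀ (z : {a : A // t a = i} → PathAlg k V A s t) (hz : ∀ b, z b ∈ spTgt k (s b.1)) (b : {a : A // t a = i}),
        Lop k a.1 (pa k V A s t b.1 • z b) = if b.1 = a.1 then z b else 0 := by
      intro z hz b
      rw [smul_eq_mul, Lop_pa_mul k _ _ (hz b)]
    rw [Finset.sum_congr rfl (fun b _ => hterm x hxa b),
        Finset.sum_congr rfl (fun b _ => hterm y hya b)] at happ
    rw [Fintype.sum_eq_single a (fun b hb => if_neg (fun h => hb (Subtype.ext h))),
        Fintype.sum_eq_single a (fun b hb => if_neg (fun h => hb (Subtype.ext h))),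
        if_pos rfl, if_pos rfl] at happ
    exact happ
  funext a
  exact key a

lemma cond_finsupp (ι : Type) : Cond s t k (ι →₀ PathAlg k V A s t) := by
  intro i x y hx hy hs
  have key : ∀ (m : ι) (a : {a : A // t a = i}), x a m = y a m := by
    intro m
    have := cond_R (s := s) (t := t) k i (fun a => x a m) (fun a => y a m) ?_ ?_ ?_
    · intro a; exact congrFun this a
    · intro a
      rw [← Finsupp.smul_apply, hx a]
    · intro a
      rw [← Finsupp.smul_apply, hy a]
    · calc ∑ a : {a : A // t a = i}, pa k V A s t a.1 • x a m
          = (∑ a : {a : A // t a = i}, pa k V A s t a.1 • x a) m := by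
            rw [Finsupp.finset_sum_apply]
            exact Finset.sum_congr rfl (fun a _ => by rw [Finsupp.smul_apply])
        _ = (∑ a : {a : A // t a = i}, pa k V A s t a.1 • y a) m := by rw [hs]
        _ = ∑ a : {a : A // t a = i}, pa k V A s t a.1 • y a m := by
            rw [Finsupp.finset_sum_apply]
            exact Finset.sum_congr rfl (fun a _ => by rw [Finsupp.smul_apply])
  funext a
  ext m
  exact key m a

lemma cond_of_projective (M : Type) [AddCommGroup M] [Module (PathAlg k V A s t) M]
    (h : Module.Projective (PathAlg k V A s t) M) : Cond s t k M := by
  obtain ⟨sec, hsec⟩ := Module.projective_def.1 h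
  exact cond_of_inj k sec hsec.injective (cond_finsupp k M)

end CondSec


section Backward

open Module

variable (k : Type) [Field k] [Fintype V] [Fintype A] [DecidableEq V]

variable (M : Type) [AddCommGroup M] [Module (PathAlg k V A s t) M]
  [Module k M] [IsScalarTower k (PathAlg k V A s t) M]

/-- The radical span. -/
def radM : Submodule k M :=
  Submodule.span k (⋃ a : A, Set.range (fun m : M => pa k V A s t a • m))

variable {s t}

lemma smul_comm_kR (c : k) (r : PathAlg k V A s t) (m : M) : r • (c • m) = c • (r • m) := by
  rw [← algebraMap_smul (PathAlg k V A s t) c m, ← mul_smul, ← Algebra.commutes, mul_smul,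
    algebraMap_smul]

lemma sum_pv_smul (m : M) : ∑ i : V, pv k V A s t i • m = m := by
  rw [← Finset.sum_smul, sum_pv, one_smul]

/-- Spans of path-translates of length `n`. -/
def SpM (n : ℕ) : Submodule k M :=
  Submodule.span k {x : M | ∃ (j l : V) (p : Pth s t j l), p.len = n ∧ ∃ m : M, x = pe k p • m}

lemma mem_SpM_zero (m : M) : m ∈ SpM k M (s := s) (t := t) 0 := by
  rw [← sum_pv_smul (s := s) (t := t) k M m]
  refine Submodule.sum_mem _ (fun i _ => ?_)
  exact Submodule.subset_span ⟨i, i, Pth.nil i, rfl, m, rfl⟩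

lemma SpM_succ (hrad : ∀ m : M, m ∈ radM s t k M) (n : ℕ) :
    SpM k M (s := s) (t := t) n ≤ SpM k M (s := s) (t := t) (n + 1) := by
  refine Submodule.span_le.2 ?_
  rintro x ⟨j, l, p, hlen, m, rfl⟩
  have hm := hrad m
  clear hrad
  refine Submodule.span_induction ?_ ?_ ?_ ?_ hm
  · rintro m' hm'
    simp only [Set.mem_iUnion, Set.mem_range] at hm'
    obtain ⟨a, m'', rfl⟩ := hm'
    rw [← mul_smul, pa_eq_pe, ]
    by_cases h : t a = j
    · subst h
      rw [pe_mul_pe]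
      exact Submodule.subset_span ⟨_, _, _, by rw [Pth.len_app, hlen]; simp [Pth.len], m'', rfl⟩
    · rw [pe_mul_pe_ne k p _ h, zero_smul]
      exact zero_mem _
  · rw [smul_zero]; exact zero_mem _
  · intro u w _ _ hu hw; rw [smul_add]; exact add_mem hu hw
  · intro c u _ hu
    rw [smul_comm_kR]
    exact Submodule.smul_mem _ _ hu

section WithAcyc

variable (hacyc : ∀ (n : ℕ) (p : Fin (n + 1) → A),
      (∀ m : Fin n, t (p m.castSucc) = s (p m.succ)) → s (p 0) ≠ t (p (Fin.last n)))
include hacyc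

lemma subsingleton_of_rad (hrad : ∀ m : M, m ∈ radM s t k M) : Subsingleton M := by
  have hall : ∀ (n : ℕ) (m : M), m ∈ SpM k M (s := s) (t := t) n := by
    intro n
    induction n with
    | zero => exact mem_SpM_zero k M
    | succ n ih => exact fun m => SpM_succ k M hrad n (ih m)
  have hbot : SpM k M (s := s) (t := t) (Fintype.card V) ≤ ⊥ := by
    refine Submodule.span_le.2 ?_
    rintro x ⟨j, l, p, hlen, m, rfl⟩
    exact absurd hlen (Nat.ne_of_lt (len_lt_card hacyc p))
  refine subsingleton_of_forall_eq 0 (fun m => ?_)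
  simpa using hbot (hall (Fintype.card V) m)

lemma exists_not_rad (hns : ¬Subsingleton M) :
    ∃ (i : V) (v : M), pv k V A s t i • v = v ∧ v ∉ radM s t k M := by
  by_contra hcon
  push_neg at hcon
  refine hns (subsingleton_of_rad k M hacyc (fun m => ?_))
  rw [← sum_pv_smul (s := s) (t := t) k M m]
  refine Submodule.sum_mem _ (fun i _ => ?_)
  refine hcon i (pv k V A s t i • m) ?_
  rw [← mul_smul, pv_mul_pv, if_pos rfl]

end WithAcyc

lemma self_case {i : V} {v : M}
    (hacyc : ∀ (n : ℕ) (p : Fin (n + 1) → A),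
      (∀ m : Fin n, t (p m.castSucc) = s (p m.succ)) → s (p 0) ≠ t (p (Fin.last n)))
    (hv1 : pv k V A s t i • v = v) (hv0 : v ≠ 0)
    (x : PathAlg k V A s t) (hx : x ∈ spJL k i i) (hxv : x • v = 0) : x = 0 := by
  obtain ⟨c, hc⟩ := Submodule.mem_span_singleton.1 (spJL_self_le k hacyc i hx)
  rw [← hc, smul_assoc, hv1] at hxv
  rcases smul_eq_zero.1 hxv with h | h
  · rw [← hc, h, zero_smul]
  · exact absurd h hv0

lemma inj_main {i : V} {v : M}
    (hacyc : ∀ (n : ℕ) (p : Fin (n + 1) → A),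
      (∀ m : Fin n, t (p m.castSucc) = s (p m.succ)) → s (p 0) ≠ t (p (Fin.last n)))
    (hcond : Cond s t k M)
    (hv1 : pv k V A s t i • v = v) (hv0 : v ≠ 0) :
    ∀ (n : ℕ) (j : V) (x : PathAlg k V A s t), x ∈ spJLn k i j n → x • v = 0 → x = 0 := by
  intro n
  induction n with
  | zero =>
      intro j x hx hxv
      by_cases hji : j = i
      · subst hji
        exact self_case k M hacyc hv1 hv0 x (spJLn_le_spJL k hx) hxv
      · exact spJLn_ne_zero k (fun h => hji h.symm) hx
  | succ n ih =>
      intro j x hx hxv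
      by_cases hji : j = i
      · subst hji
        exact self_case k M hacyc hv1 hv0 x (spJLn_le_spJL k hx) hxv
      · have hne : i ≠ j := fun h => hji h.symm
        have hid := key_identity k hne (spJLn_le_spJL k hx)
        have hz : ∀ a : {a : A // t a = j}, Lop k a.1 x ∈ spJLn k i (s a.1) n :=
          fun a => Lop_mem_spJLn k a.1 hx
        have hzv : ∀ a : {a : A // t a = j}, (Lop k a.1 x) • v = 0 := by
          have happ := hcond j (fun a => (Lop k a.1 x) • v) 0 ?_ ?_ ?_
          · intro a; exact congrFun happ a
          · intro a
            rw [← mul_smul, pv_mul_of_mem_spJL k (spJLn_le_spJL k (hz a))]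
          · intro a; rw [Pi.zero_apply, smul_zero]
          · rw [Finset.sum_congr rfl (fun a _ => by rw [← mul_smul]), ← Finset.sum_smul,
              ← hid, hxv]
            simp
        have hz0 : ∀ a : {a : A // t a = j}, Lop k a.1 x = 0 :=
          fun a => ih (s a.1) (Lop k a.1 x) (hz a) (hzv a)
        rw [hid, Finset.sum_congr rfl (fun a _ => by rw [hz0 a, mul_zero]),
          Finset.sum_const_zero]

lemma cond_quot {i : V} {v : M}
    (hacyc : ∀ (n : ℕ) (p : Fin (n + 1) → A),
      (∀ m : Fin n, t (p m.castSucc) = s (p m.succ)) → s (p 0) ≠ t (p (Fin.last n)))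
    (hcond : Cond s t k M)
    (hv1 : pv k V A s t i • v = v) (hv2 : v ∉ radM s t k M) :
    Cond s t k (M ⧸ LinearMap.range (LinearMap.toSpanSingleton (PathAlg k V A s t) M v)) := by
  set K := LinearMap.range (LinearMap.toSpanSingleton (PathAlg k V A s t) M v) with hK
  intro j x y hx hy hs
  have hv0 : v ≠ 0 := fun h => hv2 (h ▸ zero_mem _)
  -- lift the families
  have lift : ∀ z : {a : A // t a = j} → (M ⧸ K), (∀ a, pv k V A s t (s a.1) • z a = z a) →
      ∃ z' : {a : A // t a = j} → M, (∀ a, pv k V A s t (s a.1) • z' a = z' a) ∧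
        (∀ a, K.mkQ (z' a) = z a) := by
    intro z hz
    choose w hw using fun a => Submodule.Quotient.mk_surjective K (z a)
    refine ⟨fun a => pv k V A s t (s a.1) • w a, fun a => ?_, fun a => ?_⟩
    · rw [← mul_smul, pv_mul_pv, if_pos rfl]
    · rw [map_smul, Submodule.mkQ_apply, hw a, hz a]
  obtain ⟨x', hxe, hxq⟩ := lift x hx
  obtain ⟨y', hye, hyq⟩ := lift y hy
  set w := (∑ a : {a : A // t a = j}, pa k V A s t a.1 • x' a)
    - (∑ a : {a : A // t a = j}, pa k V A s t a.1 • y' a) with hw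
  have hwK : w ∈ K := by
    rw [← Submodule.Quotient.mk_eq_zero K, ← Submodule.mkQ_apply, hw, map_sub, map_sum, map_sum]
    simp only [map_smul, hxq, hyq]
    rw [hs, sub_self]
  have hwj : pv k V A s t j • w = w := by
    have hterm : ∀ (z' : {a : A // t a = j} → M) (a : {a : A // t a = j}),
        pv k V A s t j • (pa k V A s t a.1 • z' a) = pa k V A s t a.1 • z' a := by
      intro z' a
      rw [← mul_smul, pv_mul_pa, if_pos a.2.symm]
    rw [hw, smul_sub, Finset.smul_sum, Finset.smul_sum,
      Finset.sum_congr rfl (fun a _ => hterm x' a), Finset.sum_congr rfl (fun a _ => hterm y' a)]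
  obtain ⟨r, hr⟩ := hwK
  have hrw : r • v = w := hr
  set x0 := pv k V A s t j * r * pv k V A s t i with hx0def
  have hwx0 : x0 • v = w := by
    rw [hx0def, mul_smul, hv1, mul_smul, hrw, hwj]
  have hx0 : x0 ∈ spJL k i j := by
    refine mem_spJL_of_mul k i j x0 ?_ ?_
    · rw [hx0def, ← mul_assoc, ← mul_assoc, pv_mul_pv, if_pos rfl]
    · rw [hx0def, mul_assoc, mul_assoc, pv_mul_pv, if_pos rfl, ← mul_assoc]
  by_cases hji : j = i
  · subst hji
    obtain ⟨c, hc⟩ := Submodule.mem_span_singleton.1 (spJL_self_le k hacyc j hx0)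
    have hwc : w = c • v := by rw [← hwx0, ← hc, smul_assoc, hv1]
    by_cases hc0 : c = 0
    · have hw0 : (∑ a : {a : A // t a = j}, pa k V A s t a.1 • x' a)
          = ∑ a : {a : A // t a = j}, pa k V A s t a.1 • y' a := by
        have : w = 0 := by rw [hwc, hc0, zero_smul]
        rw [hw] at this
        exact sub_eq_zero.1 this
      have := hcond j x' y' hxe hye hw0
      funext a
      rw [← hxq a, ← hyq a, this]
    · exfalso
      have hwrad : w ∈ radM s t k M := by
        rw [hw]
        refine sub_mem (Submodule.sum_mem _ (fun a _ => ?_)) (Submodule.sum_mem _ (fun a _ => ?_))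
        · exact Submodule.subset_span (Set.mem_iUnion.2 ⟨a.1, Set.mem_range.2 ⟨x' a, rfl⟩⟩)
        · exact Submodule.subset_span (Set.mem_iUnion.2 ⟨a.1, Set.mem_range.2 ⟨y' a, rfl⟩⟩)
      refine hv2 ?_
      have : v = c⁻¹ • w := by rw [hwc, smul_smul, inv_mul_cancel₀ hc0, one_smul]
      rw [this]
      exact Submodule.smul_mem _ _ hwrad
  · have hne : i ≠ j := fun h => hji h.symm
    have hid := key_identity k hne hx0
    set u : {a : A // t a = j} → M := fun a => (Lop k a.1 x0) • v with hu
    have humem : ∀ a : {a : A // t a = j}, Lop k a.1 x0 ∈ spJL k i (s a.1) :=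
      fun a => Lop_mem_spJL k a.1 hx0
    have hue : ∀ a : {a : A // t a = j}, pv k V A s t (s a.1) • u a = u a := by
      intro a
      rw [hu, ← mul_smul, pv_mul_of_mem_spJL k (humem a)]
    have huq : ∀ a : {a : A // t a = j}, K.mkQ (u a) = 0 := by
      intro a
      rw [Submodule.mkQ_apply, Submodule.Quotient.mk_eq_zero]
      exact ⟨Lop k a.1 x0, rfl⟩
    have hsum : ∑ a : {a : A // t a = j}, pa k V A s t a.1 • u a = w := by
      rw [← hwx0,
        Finset.sum_congr rfl (fun a _ => by rw [hu, ← mul_smul]), ← Finset.sum_smul, ← hid]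
    have key := hcond j x' (fun a => y' a + u a) hxe ?_ ?_
    · funext a
      have hkey := congrFun key a
      rw [← hxq a, ← hyq a, hkey, map_add, huq a, add_zero]
    · intro a
      rw [smul_add, hye a, hue a]
    · rw [Finset.sum_congr rfl (fun (a : {a : A // t a = j}) _ =>
        smul_add (pa k V A s t a.1) (y' a) (u a)), Finset.sum_add_distrib, hsum, hw]
      abel

lemma backward
    (hacyc : ∀ (n : ℕ) (p : Fin (n + 1) → A),
      (∀ m : Fin n, t (p m.castSucc) = s (p m.succ)) → s (p 0) ≠ t (p (Fin.last n))) :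
    ∀ (n : ℕ) (M : Type) [AddCommGroup M] [Module (PathAlg k V A s t) M]
      [Module k M] [IsScalarTower k (PathAlg k V A s t) M] [Module.Finite k M],
      Module.finrank k M ≤ n → Cond s t k M →
      Module.Projective (PathAlg k V A s t) M := by
  intro n
  induction n with
  | zero =>
      intro M _ _ _ _ _ hrank hcond
      haveI : Subsingleton M := Module.finrank_zero_iff.1 (Nat.le_zero.1 hrank)
      infer_instance
  | succ n ih =>
      intro M _ _ _ _ _ hrank hcond
      by_cases hss : Subsingleton M
      · infer_instance
      obtain ⟨i, v, hv1, hv2⟩ := exists_not_rad k M hacyc hss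
      have hv0 : v ≠ 0 := fun h => hv2 (h ▸ zero_mem _)
      set K := LinearMap.range (LinearMap.toSpanSingleton (PathAlg k V A s t) M v) with hKdef
      set Pii := LinearMap.range
        (LinearMap.toSpanSingleton (PathAlg k V A s t) _ (pv k V A s t i)) with hPiidef
      have hPimul : ∀ x : PathAlg k V A s t, x ∈ Pii → x * pv k V A s t i = x := by
        rintro x ⟨r, rfl⟩
        rw [LinearMap.toSpanSingleton_apply, smul_eq_mul, mul_assoc, pv_mul_pv, if_pos rfl]
      haveI hprojPi : Module.Projective (PathAlg k V A s t) Pii := by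
        refine Module.Projective.of_split Pii.subtype
          (LinearMap.codRestrict Pii
            (LinearMap.toSpanSingleton (PathAlg k V A s t) _ (pv k V A s t i))
            (fun r => ⟨r, rfl⟩)) ?_
        ext x
        show (x : PathAlg k V A s t) • pv k V A s t i = (x : PathAlg k V A s t)
        rw [smul_eq_mul]
        exact hPimul x x.2
      set g := (LinearMap.toSpanSingleton (PathAlg k V A s t) M v).comp Pii.subtype with hgdef
      have hker : LinearMap.ker g = ⊥ := by
        rw [eq_bot_iff]
        rintro ⟨x, hxPi⟩ hker
        rw [LinearMap.mem_ker] at hker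
        have hxv : x • v = 0 := hker
        have hxpv : x * pv k V A s t i = x := hPimul x hxPi
        have hzero : ∀ jj : V, pv k V A s t jj * x = 0 := by
          intro jj
          refine inj_main k M hacyc hcond hv1 hv0 (Fintype.card V) jj _ ?_ ?_
          · refine spJL_le_spJLn k hacyc i jj (mem_spJL_of_mul k i jj _ ?_ ?_)
            · rw [← mul_assoc, pv_mul_pv, if_pos rfl]
            · rw [mul_assoc, hxpv]
          · rw [mul_smul, hxv, smul_zero]
        have hx0 : x = 0 := by
          calc x = (1 : PathAlg k V A s t) * x := (one_mul x).symm
          _ = ∑ jj : V, pv k V A s t jj * x := by rw [← sum_pv s t k, Finset.sum_mul]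
          _ = 0 := by
              rw [Finset.sum_congr rfl (fun jj _ => hzero jj), Finset.sum_const_zero]
        simp only [Submodule.mem_bot]
        exact Subtype.ext hx0
      have hginj : Function.Injective g := by
        intro x y hxy
        have h1 : g (x - y) = 0 := by
          show ((x - y : Pii) : PathAlg k V A s t) • v = 0
          have hxy' : (x : PathAlg k V A s t) • v = (y : PathAlg k V A s t) • v := hxy
          rw [Submodule.coe_sub, sub_smul, hxy', sub_self]
        exact sub_eq_zero.1 (LinearMap.ker_eq_bot'.1 hker _ h1)
      have hrange : LinearMap.range g = K := by
        apply le_antisymm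
        · rintro z ⟨⟨x, hxPi⟩, rfl⟩
          exact ⟨x, rfl⟩
        · rintro z ⟨r, rfl⟩
          refine ⟨⟨LinearMap.toSpanSingleton (PathAlg k V A s t) _ (pv k V A s t i) r,
            ⟨r, rfl⟩⟩, ?_⟩
          show ((LinearMap.toSpanSingleton (PathAlg k V A s t) _ (pv k V A s t i)) r) • v
            = LinearMap.toSpanSingleton (PathAlg k V A s t) M v r
          rw [LinearMap.toSpanSingleton_apply, LinearMap.toSpanSingleton_apply, smul_eq_mul,
            mul_smul, hv1]
      haveI hprojK : Module.Projective (PathAlg k V A s t) K := by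
        rw [← hrange]
        have e : Pii ≃ₗ[PathAlg k V A s t] LinearMap.range g := LinearEquiv.ofInjective g hginj
        refine Module.Projective.of_split e.symm.toLinearMap e.toLinearMap ?_
        ext z
        simp
      haveI hfinQ : Module.Finite k (M ⧸ K) :=
        Module.Finite.of_surjective (K.mkQ.restrictScalars k) (Submodule.mkQ_surjective K)
      have hrankQ : Module.finrank k (M ⧸ K) ≤ n := by
        set K' := K.restrictScalars k with hK'def
        have heq : Module.finrank k (M ⧸ K) = Module.finrank k (M ⧸ K') :=
          (LinearEquiv.finrank_eq (Submodule.Quotient.restrictScalarsEquiv k K)).symm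
        have hadd := Submodule.finrank_quotient_add_finrank K'
        have hKne : K' ≠ ⊥ := by
          intro hbot
          have hvK : v ∈ K' := by
            rw [hK'def, Submodule.restrictScalars_mem]
            exact ⟨1, by rw [LinearMap.toSpanSingleton_apply, one_smul]⟩
          rw [hbot] at hvK
          exact hv0 (Submodule.mem_bot k |>.1 hvK)
        have hKpos : 0 < Module.finrank k K' := by
          rcases Nat.eq_zero_or_pos (Module.finrank k K') with h | h
          · exact absurd (Submodule.finrank_eq_zero.1 h) hKne
          · exact h
        omega
      haveI hprojQ : Module.Projective (PathAlg k V A s t) (M ⧸ K) :=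
        ih (M ⧸ K) hrankQ (cond_quot k M hacyc hcond hv1 hv2)
      obtain ⟨sec, hsec⟩ := Module.projective_lifting_property K.mkQ LinearMap.id
        (Submodule.mkQ_surjective K)
      have hmem : ∀ m : M, ((LinearMap.id : M →ₗ[PathAlg k V A s t] M) - sec ∘ₗ K.mkQ) m ∈ K := by
        intro m
        have hmk : K.mkQ (sec (K.mkQ m)) = K.mkQ m := by
          have := LinearMap.congr_fun hsec (K.mkQ m)
          simpa using this
        rw [← Submodule.Quotient.mk_eq_zero K]
        show Submodule.Quotient.mk (m - sec (K.mkQ m)) = (0 : M ⧸ K)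
        rw [← Submodule.mkQ_apply, map_sub, hmk, sub_self]
      refine Module.Projective.of_split
        (LinearMap.prod (LinearMap.codRestrict K ((LinearMap.id : M →ₗ[PathAlg k V A s t] M) - sec ∘ₗ K.mkQ) hmem) K.mkQ)
        (K.subtype ∘ₗ LinearMap.fst (PathAlg k V A s t) K (M ⧸ K)
          + sec ∘ₗ LinearMap.snd (PathAlg k V A s t) K (M ⧸ K)) ?_
      ext m
      simp only [LinearMap.comp_apply, LinearMap.add_apply, LinearMap.prod_apply, Pi.prod,
        LinearMap.fst_apply, LinearMap.snd_apply, LinearMap.codRestrict_apply,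
        Submodule.coe_subtype, LinearMap.sub_apply, LinearMap.id_apply, LinearMap.id_coe, id_eq]
      exact sub_add_cancel m (sec (K.mkQ m))

end Backward

end QPAux

/-- For a finite acyclic quiver `Q` and a finite-dimensional `kQ`-module `M`, `M` is
projective if and only if for every vertex `i` the canonical map
`⊕_{α: j→i} e_j M → M`, `(x_α) ↦ Σ_α α·x_α`, is injective. -/
theorem projective_iff_arrow_maps_injective (V A : Type) [Fintype V] [Fintype A]
    [DecidableEq V] (s t : A → V)
    (hacyc : ∀ (n : ℕ) (p : Fin (n + 1) → A),
      (∀ m : Fin n, t (p m.castSucc) = s (p m.succ)) → s (p 0) ≠ t (p (Fin.last n)))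
    (M : Type) [AddCommGroup M] [Module (PathAlg k V A s t) M]
    [Module k M] [IsScalarTower k (PathAlg k V A s t) M] [Module.Finite k M] :
    Module.Projective (PathAlg k V A s t) M ↔
      ∀ i : V, ∀ x y : {a : A // t a = i} → M,
        (∀ a : {a : A // t a = i}, (pv k V A s t (s a.1)) • x a = x a) →
        (∀ a : {a : A // t a = i}, (pv k V A s t (s a.1)) • y a = y a) →
        (∑ a : {a : A // t a = i}, (pa k V A s t a.1) • x a
          = ∑ a : {a : A // t a = i}, (pa k V A s t a.1) • y a) →
        x = y := by
  constructor
  · intro h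
    exact QPAux.cond_of_projective k M h
  · intro h
    exact QPAux.backward k hacyc (Module.finrank k M) M le_rfl h
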